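/- Let λ ∈ [0,1) and define φ(z) = z/(1 − 2λz + z²) for z ∈ 𝔻. Then φ is univalent (injective) on 𝔻, its image φ(𝔻) is the complement in ℂ of the two real rays (−∞, −1/(2(1+λ))] ∪ [1/(2(1−λ)), +∞), and dist(φ(0), ∂φ(𝔻)) = 1/(2(1+λ)). -/

import Mathlib

open Complex Metric Set

noncomputable section

/-- The open unit disk in the complex plane. -/
def unitDisk : Set ℂ := Metric.ball 0 1

/-- `h` is subordinate to `φ` on the unit disk: `h = φ ∘ ω` for some analytic
self-map `ω` of the unit disk fixing the origin. -/
def Subordinate (h φ : ℂ → ℂ) : Prop :=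
  ∃ ω : ℂ → ℂ, AnalyticOnNhd ℂ ω unitDisk ∧ ω 0 = 0 ∧
    Set.MapsTo ω unitDisk unitDisk ∧ ∀ z ∈ unitDisk, h z = φ (ω z)

/-- For real `c` with `|c| ≤ 1`, the quadratic `z² - 2cz + 1` has no root in the disk. -/
lemma quad_ne_zero (c : ℝ) (hc : |c| ≤ 1) (z : ℂ) (hz : ‖z‖ < 1) :
    z ^ 2 - 2 * (c : ℂ) * z + 1 ≠ 0 := by
  have hc2 : (0:ℝ) ≤ 1 - c ^ 2 := by nlinarith [_root_.sq_abs c, abs_nonneg c]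
  set α : ℂ := ⟨c, Real.sqrt (1 - c ^ 2)⟩ with hα
  have hns : Complex.normSq α = 1 := by
    rw [hα, Complex.normSq_mk, Real.mul_self_sqrt hc2]; ring
  have habs : ‖α‖ = 1 := by
    rw [Complex.norm_def, hns, Real.sqrt_one]
  have h1 : α + (starRingEnd ℂ) α = 2 * (c : ℂ) := by
    rw [Complex.add_conj]
    have : α.re = c := rfl
    rw [this]; push_cast; ring
  have h2 : α * (starRingEnd ℂ) α = 1 := by
    rw [Complex.mul_conj, hns]; norm_num
  have hfac : z ^ 2 - 2 * (c : ℂ) * z + 1 = (z - α) * (z - (starRingEnd ℂ) α) := by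
    linear_combination z * h1 - h2
  rw [hfac]
  apply mul_ne_zero
  · intro h
    have hzα : z = α := sub_eq_zero.mp h
    rw [hzα, habs] at hz; exact lt_irrefl 1 hz
  · intro h
    have hzα : z = (starRingEnd ℂ) α := sub_eq_zero.mp h
    rw [hzα, Complex.norm_conj, habs] at hz; exact lt_irrefl 1 hz

/-- If `t` is not a real number of the segment `[-2,2]`, then `z² - tz + 1` has a
root inside the unit disk. -/
lemma exists_root_in_disk (t : ℂ) (ht : ¬(t.im = 0 ∧ |t.re| ≤ 2)) :
    ∃ z : ℂ, ‖z‖ < 1 ∧ z ^ 2 - t * z + 1 = 0 := by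
  obtain ⟨s, hs⟩ := IsAlgClosed.exists_pow_nat_eq (t ^ 2 - 4) (n := 2) (by norm_num)
  set z₁ : ℂ := (t + s) / 2 with hz₁def
  set z₂ : ℂ := (t - s) / 2 with hz₂def
  have hroot1 : z₁ ^ 2 - t * z₁ + 1 = 0 := by
    rw [hz₁def]; linear_combination hs / 4
  have hroot2 : z₂ ^ 2 - t * z₂ + 1 = 0 := by
    rw [hz₂def]; linear_combination hs / 4
  have hprod : z₁ * z₂ = 1 := by
    rw [hz₁def, hz₂def]; linear_combination -hs / 4
  have hsum : z₁ + z₂ = t := by rw [hz₁def, hz₂def]; ring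
  rcases lt_or_ge ‖z₁‖ 1 with h | h1
  · exact ⟨z₁, h, hroot1⟩
  rcases lt_or_ge ‖z₂‖ 1 with h | h2
  · exact ⟨z₂, h, hroot2⟩
  exfalso
  have habsprod : ‖z₁‖ * ‖z₂‖ = 1 := by
    rw [← norm_mul, hprod, norm_one]
  have hab1 : ‖z₁‖ = 1 := by nlinarith
  have hab2 : ‖z₂‖ = 1 := by nlinarith
  have hz10 : z₁ ≠ 0 := by
    intro h; rw [h, norm_zero] at hab1; norm_num at hab1
  have hconj : z₂ = (starRingEnd ℂ) z₁ := by
    have h1 : z₁ * (starRingEnd ℂ) z₁ = 1 := by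
      rw [Complex.mul_conj]
      have : Complex.normSq z₁ = 1 := by
        rw [← Complex.sq_norm, hab1]; norm_num
      rw [this]; norm_num
    exact (mul_left_cancel₀ hz10 (hprod.trans h1.symm))
  have htre : t = 2 * (z₁.re : ℂ) := by
    rw [← hsum, hconj, Complex.add_conj]; push_cast; ring
  apply ht
  constructor
  · rw [htre]; simp
  · rw [htre]
    have h3 : (2 * (z₁.re:ℂ)).re = 2 * z₁.re := by simp
    rw [h3, abs_mul, _root_.abs_of_nonneg (by norm_num : (0:ℝ) ≤ 2)]
    have := Complex.abs_re_le_norm z₁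
    rw [hab1] at this
    linarith [abs_nonneg z₁.re]

theorem example_b_univalent_image_dist
    (lam : ℝ) (hlam : lam ∈ Set.Ico (0 : ℝ) 1)
    (φ : ℂ → ℂ)
    (hφ : ∀ z : ℂ, φ z = z / (1 - 2 * (lam : ℂ) * z + z ^ 2)) :
    Set.InjOn φ unitDisk ∧
    φ '' unitDisk =
      ((fun x : ℝ => (x : ℂ)) ''
        (Set.Iic (-(1 / (2 * (1 + lam)))) ∪ Set.Ici (1 / (2 * (1 - lam)))))ᶜ ∧
    Metric.infDist (φ 0) (frontier (φ '' unitDisk)) = 1 / (2 * (1 + lam)) := by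
  obtain ⟨hl0, hl1⟩ := hlam
  have h1p : (0:ℝ) < 1 + lam := by linarith
  have h1m : (0:ℝ) < 1 - lam := by linarith
  have hlabs : |lam| ≤ 1 := by rw [_root_.abs_of_nonneg hl0]; linarith
  have hmem_abs : ∀ z ∈ unitDisk, ‖z‖ < 1 := by
    intro z hz
    simpa using mem_ball_zero_iff.mp hz
  have hden : ∀ z ∈ unitDisk, (1 : ℂ) - 2 * (lam:ℂ) * z + z ^ 2 ≠ 0 := by
    intro z hz h
    exact quad_ne_zero lam hlabs z (hmem_abs z hz) (by linear_combination h)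
  -- injectivity
  have hinj : Set.InjOn φ unitDisk := by
    intro z hz w hw hzw
    rw [hφ z, hφ w, div_eq_div_iff (hden z hz) (hden w hw)] at hzw
    have key : (z - w) * (1 - z * w) = 0 := by linear_combination hzw
    have h1zw : (1:ℂ) - z * w ≠ 0 := by
      intro h
      have hzw1 : z * w = 1 := by linear_combination -h
      have : ‖z * w‖ < 1 := by
        rw [norm_mul]
        calc ‖z‖ * ‖w‖ ≤ ‖z‖ * 1 := by
              apply mul_le_mul_of_nonneg_left (le_of_lt (hmem_abs w hw)) (norm_nonneg z)
          _ < 1 := by rw [mul_one]; exact hmem_abs z hz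
      rw [hzw1, norm_one] at this; exact lt_irrefl 1 this
    rcases mul_eq_zero.mp key with h | h
    · exact sub_eq_zero.mp h
    · exact absurd h h1zw
  -- image identification
  have himg : φ '' unitDisk =
      ((fun x : ℝ => (x : ℂ)) ''
        (Set.Iic (-(1 / (2 * (1 + lam)))) ∪ Set.Ici (1 / (2 * (1 - lam)))))ᶜ := by
    ext w
    simp only [mem_image, mem_compl_iff, not_exists]
    constructor
    · rintro ⟨z, hz, rfl⟩
      rintro x ⟨hxA, hxeq⟩
      have hDz := hden z hz
      have hx0 : x ≠ 0 := by
        rcases hxA with hx | hx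
        · simp only [mem_Iic] at hx
          have : (0:ℝ) < 1 / (2 * (1 + lam)) := by positivity
          intro h; rw [h] at hx; linarith
        · simp only [mem_Ici] at hx
          have : (0:ℝ) < 1 / (2 * (1 - lam)) := by positivity
          intro h; rw [h] at hx; linarith
      have hzx : (x:ℂ) * (1 - 2 * (lam:ℂ) * z + z ^ 2) = z := by
        rw [hφ z] at hxeq
        rw [eq_div_iff hDz] at hxeq
        exact hxeq
      set c : ℝ := lam + 1 / (2 * x) with hcdef
      have hc2x : 2 * c * x = 2 * lam * x + 1 := by
        rw [hcdef]; field_simp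
      have hc2xC : 2 * (c:ℂ) * (x:ℂ) = 2 * (lam:ℂ) * (x:ℂ) + 1 := by
        exact_mod_cast congrArg (fun r : ℝ => (r : ℂ)) hc2x
      have key : (x:ℂ) * (z ^ 2 - 2 * (c:ℂ) * z + 1) = 0 := by
        linear_combination hzx - z * hc2xC
      have hquad : z ^ 2 - 2 * (c:ℂ) * z + 1 = 0 :=
        (mul_eq_zero.mp key).resolve_left (Complex.ofReal_ne_zero.mpr hx0)
      have hcabs : |c| ≤ 1 := by
        rw [abs_le, hcdef]
        rcases hxA with hx | hx
        · simp only [mem_Iic] at hx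
          have hxneg : x < 0 := lt_of_le_of_lt hx (neg_lt_zero.mpr (by positivity))
          have hu : (1 / (2 * x)) * (2 * x) = 1 := by field_simp
          have huneg : 1 / (2 * x) < 0 := by
            apply div_neg_of_pos_of_neg; norm_num; linarith
          have hv : (1 / (2 * (1 + lam))) * (2 * (1 + lam)) = 1 := by field_simp
          constructor
          · nlinarith [hu, hv, hx, hxneg, huneg, h1p]
          · linarith
        · simp only [mem_Ici] at hx
          have hxpos : (0:ℝ) < x := lt_of_lt_of_le (by positivity) hx
          have hu : (1 / (2 * x)) * (2 * x) = 1 := by field_simp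
          have hupos : 0 < 1 / (2 * x) := by positivity
          have hv : (1 / (2 * (1 - lam))) * (2 * (1 - lam)) = 1 := by field_simp
          constructor
          · linarith
          · nlinarith [hu, hv, hx, hxpos, hupos, h1m]
      exact quad_ne_zero c hcabs z (hmem_abs z hz) hquad
    · intro hw
      by_cases hw0 : w = 0
      · refine ⟨0, ?_, ?_⟩
        · simp [unitDisk]
        · rw [hφ 0, hw0]; simp
      · have ht : ¬((((2*lam : ℝ):ℂ) + w⁻¹).im = 0 ∧ |(((2*lam : ℝ):ℂ) + w⁻¹).re| ≤ 2) := by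
          rintro ⟨him0, hre2⟩
          have hnsw : Complex.normSq w ≠ 0 := by
            rwa [ne_eq, Complex.normSq_eq_zero]
          have him : w.im = 0 := by
            have h1 : (((2*lam : ℝ):ℂ) + w⁻¹).im = -w.im / Complex.normSq w := by
              simp [Complex.add_im, Complex.inv_im]
            rw [h1, div_eq_zero_iff] at him0
            rcases him0 with h | h
            · linarith [neg_eq_zero.mp h]
            · exact absurd h hnsw
          have hwx : w = ((w.re : ℝ) : ℂ) := by
            apply Complex.ext <;> simp [him]
          set x := w.re with hxdef
          have hx0 : x ≠ 0 := by
            intro h; apply hw0; rw [hwx, h]; simp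
          have hre : (((2*lam : ℝ):ℂ) + w⁻¹).re = 2*lam + x⁻¹ := by
            rw [hwx, ← Complex.ofReal_inv, ← Complex.ofReal_add, Complex.ofReal_re]
          rw [hre] at hre2
          obtain ⟨hlo, hhi⟩ := abs_le.mp hre2
          have hux : x⁻¹ * x = 1 := inv_mul_cancel₀ hx0
          rcases hx0.lt_or_gt with hxneg | hxpos
          · have hxle : x ≤ -(1 / (2 * (1 + lam))) := by
              have hv : (1 / (2 * (1 + lam))) * (2 * (1 + lam)) = 1 := by field_simp
              nlinarith [hux, hv, hlo, hxneg, h1p]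
            exact (hw x) ⟨Or.inl (mem_Iic.mpr hxle), hwx.symm⟩
          · have hxge : 1 / (2 * (1 - lam)) ≤ x := by
              have hv : (1 / (2 * (1 - lam))) * (2 * (1 - lam)) = 1 := by field_simp
              nlinarith [hux, hv, hhi, hxpos, h1m]
            exact (hw x) ⟨Or.inr (mem_Ici.mpr hxge), hwx.symm⟩
        obtain ⟨z, hzabs, hroot⟩ := exists_root_in_disk _ ht
        have hz0 : z ≠ 0 := by
          rintro rfl; simp at hroot
        have hD : (1:ℂ) - 2 * (lam:ℂ) * z + z ^ 2 = w⁻¹ * z := by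
          push_cast at hroot
          linear_combination hroot
        refine ⟨z, ?_, ?_⟩
        · simp [unitDisk, mem_ball_zero_iff, hzabs]
        · rw [hφ z, hD]
          field_simp
  -- the distance computation
  have h0 : φ 0 = 0 := by rw [hφ 0]; simp
  set R : Set ℂ := (fun x : ℝ => (x : ℂ)) ''
      (Set.Iic (-(1 / (2 * (1 + lam)))) ∪ Set.Ici (1 / (2 * (1 - lam)))) with hRdef
  have hRclosed : IsClosed R := by
    exact (Complex.isometry_ofReal.isClosedEmbedding.isClosedMap) _
      ((isClosed_Iic).union isClosed_Ici)
  have hRim : ∀ z ∈ R, z.im = 0 := by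
    rintro _ ⟨x, _, rfl⟩; simp
  have hint : interior R = ∅ := by
    rw [eq_empty_iff_forall_notMem]
    intro z hz
    obtain ⟨ε, hε, hball⟩ := Metric.isOpen_iff.mp isOpen_interior z hz
    have hmem : z + ((ε/2 : ℝ):ℂ) * Complex.I ∈ R := by
      apply interior_subset
      apply hball
      rw [Metric.mem_ball, Complex.dist_eq]
      have : z + ((ε/2 : ℝ):ℂ) * Complex.I - z = ((ε/2 : ℝ):ℂ) * Complex.I := by ring
      rw [this, norm_mul, Complex.norm_I, Complex.norm_real, Real.norm_eq_abs, mul_one,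
        _root_.abs_of_pos (by linarith)]
      linarith
    have h1 := hRim _ hmem
    have h2 := hRim z (interior_subset hz)
    simp [Complex.add_im, h2] at h1
    linarith
  have hfront : frontier (φ '' unitDisk) = R := by
    rw [himg, frontier_compl, frontier, hRclosed.closure_eq, hint, diff_empty]
  have haR : ((-(1 / (2 * (1 + lam))) : ℝ) : ℂ) ∈ R := by
    exact ⟨-(1 / (2 * (1 + lam))), Or.inl (mem_Iic.mpr le_rfl), rfl⟩
  have hdista : dist (0:ℂ) ((-(1 / (2 * (1 + lam))) : ℝ) : ℂ) = 1 / (2 * (1 + lam)) := by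
    rw [Complex.dist_eq]
    have : (0:ℂ) - ((-(1 / (2 * (1 + lam))) : ℝ) : ℂ) = (((1 / (2 * (1 + lam))) : ℝ) : ℂ) := by
      push_cast; ring
    rw [this, Complex.norm_real, Real.norm_eq_abs, _root_.abs_of_pos (by positivity)]
  refine ⟨hinj, himg, ?_⟩
  rw [h0, hfront]
  apply le_antisymm
  · calc infDist 0 R ≤ dist (0:ℂ) _ := infDist_le_dist_of_mem haR
      _ = 1 / (2 * (1 + lam)) := hdista
  · by_contra hlt
    push_neg at hlt
    obtain ⟨y, hy, hdy⟩ := (infDist_lt_iff ⟨_, haR⟩).mp hlt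
    obtain ⟨x, hx, rfl⟩ := hy
    rw [Complex.dist_eq] at hdy
    have : (0:ℂ) - (x:ℂ) = ((-x : ℝ):ℂ) := by push_cast; ring
    rw [this, Complex.norm_real, Real.norm_eq_abs, abs_neg] at hdy
    have hb : 1 / (2 * (1 + lam)) ≤ 1 / (2 * (1 - lam)) := by
      rw [div_le_div_iff₀ (by positivity) (by positivity)]
      nlinarith
    rcases hx with hx | hx
    · simp only [mem_Iic] at hx
      have hxneg : x < 0 := lt_of_le_of_lt hx (neg_lt_zero.mpr (by positivity))
      rw [abs_of_neg hxneg] at hdy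
      linarith
    · simp only [mem_Ici] at hx
      have hxpos : (0:ℝ) < x := lt_of_lt_of_le (by positivity) hx
      rw [_root_.abs_of_pos hxpos] at hdy
      linarith
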